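/- Let (A_j) be any schedule and C_j = 1 + max A_j its completion times. Define x_{j,t} = 1 if r_j ≤ t < C_j and x_{j,t} = 0 otherwise (for r_j ≤ t ≤ T). Then x is a feasible solution to (IP1), and its cost Σ_j Σ_{t=r_j}^{T} w_j·x_{j,t} equals the total weighted flow-time Σ_j w_j·(C_j − r_j) of the schedule. -/

import Mathlib

/-- (IP1) feasibility for the weighted flow-time integer program. -/
def IP1Feasible {J : Type} [Fintype J] (p r : J → ℕ) (T : ℕ) (x : J → ℕ → ℕ) : Prop :=
  (∀ j t, r j ≤ t → t ≤ T → x j t ≤ 1) ∧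
  (∀ j t, r j < t → t ≤ T → x j t ≤ x j (t - 1)) ∧
  (∀ s t : ℕ, s ≤ t → t ≤ T →
    (∑ j ∈ Finset.univ.filter fun j => s ≤ r j ∧ r j ≤ t, (p j : ℤ)) - ((t : ℤ) - (s : ℤ))
      ≤ ∑ j ∈ Finset.univ.filter fun j => s ≤ r j ∧ r j ≤ t, (p j : ℤ) * (x j t : ℤ))

/-- Cost of an (IP1) solution: `∑_j ∑_{t = r_j}^{T} w_j · x_{j,t}`. -/
def IP1Cost {J : Type} [Fintype J] (w : J → ℚ) (r : J → ℕ) (T : ℕ) (x : J → ℕ → ℕ) : ℚ :=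
  ∑ j, ∑ t ∈ Finset.Icc (r j) T, w j * (x j t : ℚ)

/-- given any schedule `(A j)` with completion times `C j = 1 + max A j`,
the assignment `x j t = 1` iff `r j ≤ t < C j` is a feasible (IP1) solution whose cost
equals the total weighted flow-time `∑_j w_j·(C_j − r_j)` of the schedule. -/
theorem stmt3 {J : Type} [Fintype J] [DecidableEq J] (p r : J → ℕ) (w : J → ℚ)
    (hp : ∀ j, 1 ≤ p j) (hw : ∀ j, 0 ≤ w j)
    (T : ℕ) (hT : T = ∑ j, p j) (hrT : ∀ j, r j < T)
    (hbusy : ∀ t : ℕ, 1 ≤ t → t ≤ T →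
      t ≤ ∑ j ∈ Finset.univ.filter fun j => r j < t, p j)
    (A : J → Finset ℕ)
    (hdisj : ∀ j j', j ≠ j' → Disjoint (A j) (A j'))
    (hrange : ∀ j, A j ⊆ Finset.range T)
    (hcard : ∀ j, (A j).card = p j)
    (hrel : ∀ j, ∀ a ∈ A j, r j ≤ a)
    (C : J → ℕ) (hC : ∀ j, C j = 1 + (A j).sup id) :
    IP1Feasible p r T (fun j t => if r j ≤ t ∧ t < C j then 1 else 0) ∧
    IP1Cost w r T (fun j t => if r j ≤ t ∧ t < C j then 1 else 0)
      = ∑ j, w j * (((C j - r j : ℕ)) : ℚ) := by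

  have hCj : ∀ j, r j < C j ∧ C j ≤ T := by
    intro j
    obtain ⟨m, hm, hsup⟩ := Finset.exists_mem_eq_sup (A j)
      (Finset.card_pos.mp (by rw [hcard]; exact hp j)) id
    have h1 : r j ≤ m := hrel j m hm
    have h2 : m < T := Finset.mem_range.mp (hrange j hm)
    have h3 : C j = 1 + m := by rw [hC, hsup]; rfl
    omega
  have hAlt : ∀ j, ∀ a ∈ A j, a < C j := by
    intro j a ha
    have := Finset.le_sup (f := id) ha
    rw [hC]; simp only [id] at this; omega
  constructor
  · refine ⟨?_, ?_, ?_⟩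
    · intro j t _ _; dsimp only; split <;> simp
    · intro j t h1 h2
      by_cases h : r j ≤ t ∧ t < C j
      · have h' : r j ≤ t - 1 ∧ t - 1 < C j := ⟨by omega, by omega⟩
        simp [h, h']
      · simp [h]
    · intro s t hst htT
      set S := Finset.univ.filter fun j => s ≤ r j ∧ r j ≤ t with hS
      have hsum0 : ∑ j ∈ S.filter (fun j => ¬ (r j ≤ t ∧ t < C j)), p j ≤ t - s := by
        set S0 := S.filter (fun j => ¬ (r j ≤ t ∧ t < C j)) with hS0
        have hsub : S0.biUnion A ⊆ Finset.Ico s t := by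
          intro a ha
          rw [Finset.mem_biUnion] at ha
          obtain ⟨j, hj, haj⟩ := ha
          rw [hS0, Finset.mem_filter, hS, Finset.mem_filter] at hj
          obtain ⟨⟨-, hsr, hrt⟩, h2⟩ := hj
          push_neg at h2
          have hCle : C j ≤ t := h2 hrt
          have h3 := hrel j a haj
          have h4 := hAlt j a haj
          rw [Finset.mem_Ico]
          exact ⟨le_trans hsr h3, by omega⟩
        have hcardb : (S0.biUnion A).card = ∑ j ∈ S0, p j := by
          rw [Finset.card_biUnion (fun j _ j' _ hne => hdisj j j' hne)]
          exact Finset.sum_congr rfl fun j _ => hcard j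
        calc ∑ j ∈ S0, p j = (S0.biUnion A).card := hcardb.symm
          _ ≤ (Finset.Ico s t).card := Finset.card_le_card hsub
          _ = t - s := Nat.card_Ico s t
      have hrw : ∀ j, (p j : ℤ) * (((if r j ≤ t ∧ t < C j then 1 else 0 : ℕ)) : ℤ)
          = if r j ≤ t ∧ t < C j then (p j : ℤ) else 0 := by
        intro j; split <;> simp
      simp only [hrw]
      rw [Finset.sum_ite, Finset.sum_const, smul_zero, add_zero]
      have hsplit := Finset.sum_filter_add_sum_filter_not S
        (fun j => r j ≤ t ∧ t < C j) (fun j => (p j : ℤ))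
      have hle0 : ∑ j ∈ S.filter (fun j => ¬ (r j ≤ t ∧ t < C j)), (p j : ℤ)
          ≤ (t : ℤ) - s := by
        have := hsum0
        have hcast : ((∑ j ∈ S.filter (fun j => ¬ (r j ≤ t ∧ t < C j)), p j : ℕ) : ℤ)
            ≤ ((t - s : ℕ) : ℤ) := by exact_mod_cast this
        push_cast at hcast
        omega
      push_cast at hle0 ⊢
      linarith [hsplit, hle0]
  · unfold IP1Cost
    refine Finset.sum_congr rfl fun j _ => ?_
    have hfil : Finset.filter (fun a => r j ≤ a ∧ a < C j) (Finset.Icc (r j) T)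
        = Finset.Ico (r j) (C j) := by
      ext a
      have := hCj j
      simp only [Finset.mem_filter, Finset.mem_Icc, Finset.mem_Ico]
      omega
    have : ∑ t ∈ Finset.Icc (r j) T,
        w j * (((if r j ≤ t ∧ t < C j then 1 else 0 : ℕ)) : ℚ)
        = ∑ t ∈ Finset.Icc (r j) T, (if r j ≤ t ∧ t < C j then w j else 0) := by
      refine Finset.sum_congr rfl fun t _ => ?_
      split <;> simp
    rw [this, Finset.sum_ite, Finset.sum_const, Finset.sum_const, smul_zero, add_zero,
      hfil, Nat.card_Ico, nsmul_eq_mul, mul_comm]
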